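/- Let (u, v) be an unmatched edge that is a bridge with tenacity(u, v) ≤ l_m. Then tenacity(u) ≤ tenacity(u, v). -/

import Mathlib

attribute [local instance] Classical.propDecidable

variable {V : Type*} [DecidableEq V]

namespace MV

/-- A walk is alternating (w.r.t. matching `M`) in the sense used for alternating paths
starting at an unmatched vertex: the `i`-th edge is matched iff `i` is odd. -/
def IsAlt (G : SimpleGraph V) (M : G.Subgraph) {a b : V} (w : G.Walk a b) : Prop :=
  ∀ i (h : i < w.edges.length), (w.edges.get ⟨i, h⟩ ∈ M.edgeSet ↔ Odd i)

/-- length of a minimum even alternating path from an unmatched vertex to `v`. -/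
noncomputable def evenlevel (G : SimpleGraph V) (M : G.Subgraph) (v : V) : ℕ∞ :=
  sInf {n : ℕ∞ | ∃ (f : V) (w : G.Walk f v),
    f ∉ M.verts ∧ w.IsPath ∧ IsAlt G M w ∧ Even w.length ∧ n = (w.length : ℕ∞)}

/-- length of a minimum odd alternating path from an unmatched vertex to `v`. -/
noncomputable def oddlevel (G : SimpleGraph V) (M : G.Subgraph) (v : V) : ℕ∞ :=
  sInf {n : ℕ∞ | ∃ (f : V) (w : G.Walk f v),
    f ∉ M.verts ∧ w.IsPath ∧ IsAlt G M w ∧ Odd w.length ∧ n = (w.length : ℕ∞)}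

noncomputable def tenacity (G : SimpleGraph V) (M : G.Subgraph) (v : V) : ℕ∞ :=
  evenlevel G M v + oddlevel G M v

noncomputable def minlevel (G : SimpleGraph V) (M : G.Subgraph) (v : V) : ℕ∞ :=
  min (evenlevel G M v) (oddlevel G M v)

noncomputable def maxlevel (G : SimpleGraph V) (M : G.Subgraph) (v : V) : ℕ∞ :=
  max (evenlevel G M v) (oddlevel G M v)

/-- the length of a minimum length augmenting path w.r.t. `M` (`⊤` if none exists). -/
noncomputable def lm (G : SimpleGraph V) (M : G.Subgraph) : ℕ∞ :=
  sInf {n : ℕ∞ | ∃ (f g : V) (w : G.Walk f g), f ∉ M.verts ∧ g ∉ M.verts ∧ f ≠ g ∧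
    w.IsPath ∧ IsAlt G M w ∧ Odd w.length ∧ n = (w.length : ℕ∞)}

/-- `w` is a minimum even- or odd-length alternating path from an unmatched vertex to `v`
  (an `evenlevel(v)` or `oddlevel(v)` path). -/
def IsMinPathTo (G : SimpleGraph V) (M : G.Subgraph) (v f : V) (w : G.Walk f v) : Prop :=
  f ∉ M.verts ∧ w.IsPath ∧ IsAlt G M w ∧
    ((Even w.length ∧ (w.length : ℕ∞) = evenlevel G M v) ∨
     (Odd w.length ∧ (w.length : ℕ∞) = oddlevel G M v))

/-- `b` is the vertex of tenacity greater than `tenacity v` on `w` furthest from the start. -/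
def IsFurthestHigh (G : SimpleGraph V) (M : G.Subgraph) (v : V) {f v' : V}
    (w : G.Walk f v') (b : V) : Prop :=
  ∃ hb : b ∈ w.support, tenacity G M v < tenacity G M b ∧
    ∀ u, ∀ hu : u ∈ w.support, tenacity G M v < tenacity G M u →
      (w.takeUntil u hu).length ≤ (w.takeUntil b hb).length

/-- `b` is the base of `v`: the furthest higher-tenacity vertex on every minimum
even or odd alternating path to `v`. -/
def IsBase (G : SimpleGraph V) (M : G.Subgraph) (v b : V) : Prop :=
  ∀ (f : V) (w : G.Walk f v), IsMinPathTo G M v f w → IsFurthestHigh G M v w b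

/-- minimum even length alternating path from `b` to `v` starting with an unmatched edge
  (`evenlevel(b; v)`). -/
noncomputable def evenlevelFrom (G : SimpleGraph V) (M : G.Subgraph) (b v : V) : ℕ∞ :=
  sInf {n : ℕ∞ | ∃ w : G.Walk b v,
    w.IsPath ∧ IsAlt G M w ∧ Even w.length ∧ n = (w.length : ℕ∞)}

/-- minimum odd length alternating path from `b` to `v` starting with an unmatched edge
  (`oddlevel(b; v)`). -/
noncomputable def oddlevelFrom (G : SimpleGraph V) (M : G.Subgraph) (b v : V) : ℕ∞ :=
  sInf {n : ℕ∞ | ∃ w : G.Walk b v,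
    w.IsPath ∧ IsAlt G M w ∧ Odd w.length ∧ n = (w.length : ℕ∞)}

def Outer (G : SimpleGraph V) (M : G.Subgraph) (v : V) : Prop :=
  evenlevel G M v < oddlevel G M v

/-- The blossom `B_{b,t}`, defined recursively, relative to a base function `bse`. -/
noncomputable def blossom (G : SimpleGraph V) (M : G.Subgraph) (bse : V → V) :
    ℕ → V → Set V
  | 0, _ => ∅
  | 1, _ => ∅
  | (t + 2), b =>
      {v | tenacity G M v = ((t + 2 : ℕ) : ℕ∞) ∧ bse v = b} ∪
      ⋃ v ∈ {u | (u = b ∨ (tenacity G M u = ((t + 2 : ℕ) : ℕ∞) ∧ bse u = b)) ∧ Outer G M u},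
        blossom G M bse t v

/-- The nesting depth `N(B_{b,t})`. -/
noncomputable def nestDepth (G : SimpleGraph V) (M : G.Subgraph) (bse : V → V) :
    ℕ → V → ℕ
  | 0, _ => 0
  | 1, _ => 0
  | (t + 2), b =>
      if {v | tenacity G M v = ((t + 2 : ℕ) : ℕ∞) ∧ bse v = b}.Nonempty then
        1 + sSup ((fun v => nestDepth G M bse t v) ''
          {u | (u = b ∨ (tenacity G M u = ((t + 2 : ℕ) : ℕ∞) ∧ bse u = b)) ∧ Outer G M u})
      else nestDepth G M bse t b

/-- `bse` assigns to each vertex of tenacity `< l_m` its (unique) base. -/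
def BaseFn (G : SimpleGraph V) (M : G.Subgraph) (bse : V → V) : Prop :=
  ∀ v, tenacity G M v < lm G M → IsBase G M v (bse v)

/-- `u` is a predecessor of `v`: `(u,v)` is the last edge of some `minlevel(v)` path. -/
def IsPred (G : SimpleGraph V) (M : G.Subgraph) (u v : V) : Prop :=
  ∃ (f : V) (w : G.Walk f v), f ∉ M.verts ∧ w.IsPath ∧ IsAlt G M w ∧
    (w.length : ℕ∞) = minlevel G M v ∧
    0 < w.length ∧ w.getVert (w.length - 1) = u

/-- A bridge is an edge of `G` that is not a prop. -/
def IsBridge (G : SimpleGraph V) (M : G.Subgraph) (u v : V) : Prop :=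
  G.Adj u v ∧ ¬ IsPred G M u v ∧ ¬ IsPred G M v u

/-- tenacity of an edge. -/
noncomputable def edgeTenacity (G : SimpleGraph V) (M : G.Subgraph) (u v : V) : ℕ∞ :=
  if s(u, v) ∈ M.edgeSet then oddlevel G M u + oddlevel G M v + 1
  else evenlevel G M u + evenlevel G M v + 1

set_option linter.unusedSectionVars false

section Aux

open SimpleGraph

variable {G : SimpleGraph V} {M : G.Subgraph}

/-- Alternation with an index offset `r`. -/
def AltFrom (G : SimpleGraph V) (M : G.Subgraph) (r : ℕ) {a b : V} (w : G.Walk a b) : Prop :=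
  ∀ i (h : i < w.edges.length), (w.edges.get ⟨i, h⟩ ∈ M.edgeSet ↔ Odd (r + i))

lemma IsAlt.altFrom {a b : V} {w : G.Walk a b} (h : IsAlt G M w) : AltFrom G M 0 w :=
  fun i hi => by rw [Nat.zero_add]; exact h i hi

lemma AltFrom.isAlt {a b : V} {w : G.Walk a b} (h : AltFrom G M 0 w) : IsAlt G M w :=
  fun i hi => by have := h i hi; rwa [Nat.zero_add] at this

lemma AltFrom.congr {r r' : ℕ} (hpar : r % 2 = r' % 2) {a b : V} {w : G.Walk a b}
    (h : AltFrom G M r w) : AltFrom G M r' w := by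
  intro i hi
  rw [h i hi, Nat.odd_iff, Nat.odd_iff]
  omega

lemma AltFrom.append {r : ℕ} {a b c : V} {w1 : G.Walk a b} {w2 : G.Walk b c}
    (h1 : AltFrom G M r w1) (h2 : AltFrom G M (r + w1.length) w2) :
    AltFrom G M r (w1.append w2) := by
  intro i hi
  simp only [List.get_eq_getElem, Walk.edges_append] at hi ⊢
  by_cases hlt : i < w1.edges.length
  · rw [List.getElem_append_left hlt]
    simpa only [List.get_eq_getElem] using h1 i hlt
  · push_neg at hlt
    rw [List.getElem_append_right hlt]
    have hi2 : i - w1.edges.length < w2.edges.length := by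
      rw [List.length_append] at hi; omega
    have := h2 (i - w1.edges.length) hi2
    simp only [List.get_eq_getElem] at this
    rw [this, Nat.odd_iff, Nat.odd_iff, Walk.length_edges] at *
    omega

lemma AltFrom.of_append_left {r : ℕ} {a b c : V} {w1 : G.Walk a b} {w2 : G.Walk b c}
    (h : AltFrom G M r (w1.append w2)) : AltFrom G M r w1 := by
  intro i hi
  have hi' : i < (w1.append w2).edges.length := by
    rw [Walk.edges_append, List.length_append]; omega
  have := h i hi'
  simp only [List.get_eq_getElem, Walk.edges_append] at this ⊢
  rwa [List.getElem_append_left hi] at this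

lemma AltFrom.of_append_right {r : ℕ} {a b c : V} {w1 : G.Walk a b} {w2 : G.Walk b c}
    (h : AltFrom G M r (w1.append w2)) : AltFrom G M (r + w1.length) w2 := by
  intro i hi
  have hi' : w1.edges.length + i < (w1.append w2).edges.length := by
    rw [Walk.edges_append, List.length_append]; omega
  have := h (w1.edges.length + i) hi'
  simp only [List.get_eq_getElem, Walk.edges_append] at this ⊢
  rw [List.getElem_append_right (by omega)] at this
  simp only [Nat.add_sub_cancel_left] at this
  rw [this, Nat.odd_iff, Nat.odd_iff, Walk.length_edges]
  omega

lemma AltFrom.reverse {s r : ℕ} {a b : V} {w : G.Walk a b} (h : AltFrom G M s w)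
    (hpar : (s + r + w.length) % 2 = 1) : AltFrom G M r w.reverse := by
  intro i hi
  have hlen : w.reverse.edges.length = w.edges.length := by
    rw [Walk.edges_reverse, List.length_reverse]
  have hi' : i < w.edges.length := hlen ▸ hi
  have hj : w.edges.length - 1 - i < w.edges.length := by omega
  have hget : w.reverse.edges.get ⟨i, hi⟩ = w.edges[w.edges.length - 1 - i] := by
    simp only [List.get_eq_getElem, Walk.edges_reverse]
    rw [List.getElem_reverse]
  rw [hget]
  have := h (w.edges.length - 1 - i) hj
  simp only [List.get_eq_getElem] at this
  rw [this, Nat.odd_iff, Nat.odd_iff]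
  have hlen2 : w.edges.length = w.length := Walk.length_edges w
  omega

lemma altFrom_nil {r : ℕ} {a : V} : AltFrom G M r (Walk.nil (u := a)) := by
  intro i hi
  simp [Walk.edges_nil] at hi

lemma altFrom_single {r : ℕ} {a b : V} (h : G.Adj a b)
    (hiff : s(a, b) ∈ M.edgeSet ↔ Odd r) : AltFrom G M r (Walk.cons h Walk.nil) := by
  intro i hi
  simp only [Walk.edges_cons, Walk.edges_nil, List.length_cons, List.length_nil] at hi
  interval_cases i
  · simpa using hiff

/-- a path appended to a path meeting it only in the common endpoint is a path -/
lemma isPath_append {a b c : V} {p : G.Walk a b} {q : G.Walk b c} (hp : p.IsPath)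
    (hq : q.IsPath) (hint : ∀ y, y ∈ p.support → y ∈ q.support → y = b) :
    (p.append q).IsPath := by
  rw [Walk.isPath_def, Walk.support_append]
  refine List.Nodup.append (Walk.isPath_def _ |>.mp hp) ((Walk.isPath_def _ |>.mp hq).tail) ?_
  intro y hy hyt
  have hyq : y ∈ q.support := List.mem_of_mem_tail hyt
  have hyb : y = b := hint y hy hyq
  subst hyb
  have : q.support.Nodup := Walk.isPath_def _ |>.mp hq
  rw [q.support_eq_cons] at this
  exact (List.nodup_cons.mp this).1 hyt

/-- the far endpoint does not lie on a proper prefix of a path -/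
lemma not_end_mem_prefix {a b c : V} {p : G.Walk a b} {q : G.Walk b c}
    (h : (p.append q).IsPath) (hbc : b ≠ c) : c ∉ p.support := by
  intro hc
  rw [Walk.isPath_def, Walk.support_append] at h
  have hct : c ∈ q.support.tail := by
    have hcq : c ∈ q.support := q.end_mem_support
    rw [q.support_eq_cons] at hcq
    rcases List.mem_cons.mp hcq with h' | h'
    · exact absurd h'.symm hbc
    · exact h'
  exact (List.disjoint_of_nodup_append h) hc hct

/-- the start vertex does not lie on a proper suffix of a path -/
lemma not_start_mem_suffix {a b c : V} {p : G.Walk a b} {q : G.Walk b c}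
    (h : (p.append q).IsPath) (hab : a ≠ b) : a ∉ q.support := by
  intro haq
  rw [Walk.isPath_def, Walk.support_append] at h
  have hat : a ∈ q.support.tail := by
    rw [q.support_eq_cons] at haq
    rcases List.mem_cons.mp haq with h' | h'
    · exact absurd h' hab
    · exact h'
  exact (List.disjoint_of_nodup_append h) p.start_mem_support hat

/-- split a walk at the first vertex belonging to `X` (assuming one exists). -/
lemma exists_first_split (X : Set V) :
    ∀ {f v : V} (S : G.Walk f v), (∃ y ∈ S.support, y ∈ X) →
      ∃ (x : V) (S1 : G.Walk f x) (S2 : G.Walk x v), x ∈ X ∧ S = S1.append S2 ∧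
        ∀ y ∈ S1.support, y ∈ X → y = x := by
  intro f v S
  induction S with
  | nil =>
    intro hex
    obtain ⟨y, hy, hyX⟩ := hex
    simp only [Walk.support_nil, List.mem_singleton] at hy
    subst hy
    exact ⟨y, Walk.nil, Walk.nil, hyX, rfl, by simp⟩
  | @cons a b c had w ih =>
    intro hex
    by_cases hf : a ∈ X
    · refine ⟨a, Walk.nil, Walk.cons had w, hf, rfl, ?_⟩
      simp
    · obtain ⟨y, hy, hyX⟩ := hex
      have hyw : y ∈ w.support := by
        simp only [Walk.support_cons, List.mem_cons] at hy
        rcases hy with rfl | hy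
        · exact absurd hyX hf
        · exact hy
      obtain ⟨x, S1, S2, hx, heq, hprop⟩ := ih ⟨y, hyw, hyX⟩
      refine ⟨x, Walk.cons had S1, S2, hx, by rw [heq]; rfl, ?_⟩
      intro z hz hzX
      simp only [Walk.support_cons, List.mem_cons] at hz
      rcases hz with rfl | hz
      · exact absurd hzX hf
      · exact hprop z hz hzX

lemma oddlevel_le_length {f u : V} (w : G.Walk f u) (hf : f ∉ M.verts) (hp : w.IsPath)
    (ha : IsAlt G M w) (hodd : Odd w.length) : oddlevel G M u ≤ (w.length : ℕ∞) :=
  sInf_le ⟨f, w, hf, hp, ha, hodd, rfl⟩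

lemma evenlevel_le_length {f u : V} (w : G.Walk f u) (hf : f ∉ M.verts) (hp : w.IsPath)
    (ha : IsAlt G M w) (heven : Even w.length) : evenlevel G M u ≤ (w.length : ℕ∞) :=
  sInf_le ⟨f, w, hf, hp, ha, heven, rfl⟩

lemma exists_evenlevel_path {v : V} (h : evenlevel G M v ≠ ⊤) :
    ∃ (f : V) (w : G.Walk f v), f ∉ M.verts ∧ w.IsPath ∧ IsAlt G M w ∧ Even w.length ∧
      (w.length : ℕ∞) = evenlevel G M v := by
  have hne : Set.Nonempty {n : ℕ∞ | ∃ (f : V) (w : G.Walk f v),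
      f ∉ M.verts ∧ w.IsPath ∧ IsAlt G M w ∧ Even w.length ∧ n = (w.length : ℕ∞)} := by
    by_contra hc
    rw [Set.not_nonempty_iff_eq_empty] at hc
    exact h (by rw [evenlevel, hc, sInf_empty])
  obtain ⟨f, w, h1, h2, h3, h4, h5⟩ := csInf_mem hne
  exact ⟨f, w, h1, h2, h3, h4, h5.symm⟩

lemma exists_oddlevel_path {v : V} (h : oddlevel G M v ≠ ⊤) :
    ∃ (f : V) (w : G.Walk f v), f ∉ M.verts ∧ w.IsPath ∧ IsAlt G M w ∧ Odd w.length ∧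
      (w.length : ℕ∞) = oddlevel G M v := by
  have hne : Set.Nonempty {n : ℕ∞ | ∃ (f : V) (w : G.Walk f v),
      f ∉ M.verts ∧ w.IsPath ∧ IsAlt G M w ∧ Odd w.length ∧ n = (w.length : ℕ∞)} := by
    by_contra hc
    rw [Set.not_nonempty_iff_eq_empty] at hc
    exact h (by rw [oddlevel, hc, sInf_empty])
  obtain ⟨f, w, h1, h2, h3, h4, h5⟩ := csInf_mem hne
  exact ⟨f, w, h1, h2, h3, h4, h5.symm⟩

end Aux

section Main

open SimpleGraph

variable {G : SimpleGraph V} {M : G.Subgraph}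

lemma oddlevel_le_of_unmatched_nonprop {u v : V} (hadj : G.Adj u v)
    (hunm : s(u, v) ∉ M.edgeSet) (hpred : ¬ IsPred G M u v) :
    oddlevel G M u ≤ evenlevel G M v + 1 := by
  by_cases hLtop : evenlevel G M v = ⊤
  · rw [hLtop]; simp
  obtain ⟨f, P, hf, hPp, hPalt, hPeven, hPlen⟩ := exists_evenlevel_path hLtop
  set L := P.length with hLdef
  have hgoal : evenlevel G M v + 1 = ((L + 1 : ℕ) : ℕ∞) := by rw [← hPlen]; push_cast; ring
  rw [hgoal]
  have hLe2 : L % 2 = 0 := Nat.even_iff.mp hPeven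
  have conclude : ∀ {g : V} (w : G.Walk g u), g ∉ M.verts → w.IsPath → AltFrom G M 0 w →
      w.length % 2 = 1 → w.length ≤ L + 1 → oddlevel G M u ≤ ((L + 1 : ℕ) : ℕ∞) := by
    intro g w h1 h2 h3 h4 h5
    exact le_trans (oddlevel_le_length w h1 h2 h3.isAlt (Nat.odd_iff.mpr h4))
      (by exact_mod_cast h5)
  have huv : u ≠ v := hadj.ne
  by_cases hu : u ∈ P.support
  swap
  · -- u is not on P : extend P by the edge (v, u)
    have hcp : (Walk.cons hadj.symm Walk.nil : G.Walk v u).IsPath := by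
      simp [Walk.isPath_def, hadj.ne']
    refine conclude (P.append (Walk.cons hadj.symm Walk.nil)) hf ?_ ?_ ?_ ?_
    · refine isPath_append hPp hcp ?_
      intro y hy hy2
      simp only [Walk.support_cons, Walk.support_nil, List.mem_cons,
        List.mem_nil_iff, or_false] at hy2
      rcases hy2 with rfl | rfl
      · rfl
      · exact absurd hy hu
    · refine hPalt.altFrom.append (altFrom_single hadj.symm (iff_of_false ?_ ?_))
      · rw [Sym2.eq_swap]; exact hunm
      · rw [Nat.zero_add, Nat.odd_iff]; omega
    · rw [Walk.length_append, Walk.length_cons, Walk.length_nil]; omega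
    · rw [Walk.length_append, Walk.length_cons, Walk.length_nil]
  -- u lies on P
  have hspec := P.take_spec hu
  set P1 := P.takeUntil u hu with hP1def
  set P2 := P.dropUntil u hu with hP2def
  set j := P1.length with hjdef
  have hsum : j + P2.length = L := by
    rw [hLdef, ← hspec, Walk.length_append]
  have hPp' : (P1.append P2).IsPath := by rw [hspec]; exact hPp
  have hP1path : P1.IsPath := hPp.takeUntil hu
  have hP2path : P2.IsPath := hPp.dropUntil hu
  have hAP : AltFrom G M 0 (P1.append P2) := by rw [hspec]; exact hPalt.altFrom
  have hA1 : AltFrom G M 0 P1 := hAP.of_append_left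
  have hA2 : AltFrom G M j P2 := by
    have := hAP.of_append_right
    rwa [Nat.zero_add, ← hjdef] at this
  have hP2pos : 0 < P2.length := by
    rcases Nat.eq_zero_or_pos P2.length with hc | hc
    · exact absurd (Walk.eq_of_length_eq_zero (p := P2) hc) huv
    · exact hc
  have hjL : j < L := by omega
  have hvP1 : v ∉ P1.support := not_end_mem_prefix hPp' huv
  rcases Nat.even_or_odd j with hje | hjo
  swap
  · -- j odd : the prefix of P up to u is an odd alternating path to u
    exact conclude P1 hf hP1path hA1 (Nat.odd_iff.mp hjo) (by omega)
  have hje2 : j % 2 = 0 := Nat.even_iff.mp hje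
  -- j even : first derive oddlevel v ≤ j using that u is not a predecessor of v
  have hcp2 : (Walk.cons hadj Walk.nil : G.Walk u v).IsPath := by
    simp [Walk.isPath_def, huv]
  have hRpath : (P1.append (Walk.cons hadj Walk.nil)).IsPath := by
    refine isPath_append hP1path hcp2 ?_
    intro y hy hy2
    simp only [Walk.support_cons, Walk.support_nil, List.mem_cons, List.mem_nil_iff, or_false] at hy2
    rcases hy2 with rfl | rfl
    · rfl
    · exact absurd hy hvP1
  have hRalt : AltFrom G M 0 (P1.append (Walk.cons hadj Walk.nil)) := by
    refine hA1.append (altFrom_single hadj (iff_of_false hunm ?_))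
    rw [Nat.zero_add, ← hjdef, Nat.odd_iff]; omega
  have hRlen : (P1.append (Walk.cons hadj Walk.nil)).length = j + 1 := by
    rw [Walk.length_append, Walk.length_cons, Walk.length_nil]
  have hOv1 : oddlevel G M v ≤ ((j + 1 : ℕ) : ℕ∞) := by
    have := oddlevel_le_length _ hf hRpath hRalt.isAlt
      (by rw [hRlen, Nat.odd_iff]; omega)
    rwa [hRlen] at this
  have hOv : oddlevel G M v ≤ (j : ℕ∞) := by
    by_contra hcon
    push_neg at hcon
    have heq : oddlevel G M v = ((j + 1 : ℕ) : ℕ∞) := by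
      refine le_antisymm hOv1 ?_
      have := (ENat.add_one_le_iff (m := (j : ℕ∞)) (by simp)).mpr hcon
      exact_mod_cast this
    have hmin : minlevel G M v = ((j + 1 : ℕ) : ℕ∞) := by
      rw [minlevel, heq, ← hPlen]
      exact min_eq_right (by exact_mod_cast (by omega : j + 1 ≤ L))
    refine hpred ⟨f, _, hf, hRpath, hRalt.isAlt, by rw [hRlen, hmin], by rw [hRlen]; omega, ?_⟩
    rw [hRlen, Nat.add_sub_cancel, Walk.getVert_append, ← hjdef]
    simp
  -- take a minimum odd alternating path S to v
  have hOvtop : oddlevel G M v ≠ ⊤ := by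
    intro h
    rw [h] at hOv
    exact absurd hOv (by simp)
  obtain ⟨g, S, hg, hSpath, hSalt, hSodd, hSlen⟩ := exists_oddlevel_path hOvtop
  set m := S.length with hmdef
  have hm2 : m % 2 = 1 := Nat.odd_iff.mp hSodd
  have hmj : m ≤ j := by
    have : (m : ℕ∞) ≤ (j : ℕ∞) := le_trans (le_of_eq hSlen) hOv
    exact_mod_cast this
  have hmlt : m < j := by omega
  by_cases huS : u ∈ S.support
  · -- u lies on S
    have hspecS := S.take_spec huS
    set S1 := S.takeUntil u huS with hS1def
    set a := S1.length with hadef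
    have hsumS : a + (S.dropUntil u huS).length = m := by
      have hper : (S1.append (S.dropUntil u huS)).length = S.length := by rw [hspecS]
      rw [Walk.length_append] at hper
      omega
    have hSp' : (S1.append (S.dropUntil u huS)).IsPath := by rw [hspecS]; exact hSpath
    have hS1path : S1.IsPath := hSpath.takeUntil huS
    have hAS : AltFrom G M 0 (S1.append (S.dropUntil u huS)) := by
      rw [hspecS]; exact hSalt.altFrom
    have hAS1 : AltFrom G M 0 S1 := hAS.of_append_left
    have hvS1 : v ∉ S1.support := not_end_mem_prefix hSp' huv
    rcases Nat.even_or_odd a with hae | hao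
    swap
    · -- a odd : prefix of S is an odd alternating walk to u
      exact conclude S1 hg hS1path hAS1 (Nat.odd_iff.mp hao) (by omega)
    · -- a even : leads to a contradiction with ¬ IsPred u v
      exfalso
      have hae2 : a % 2 = 0 := Nat.even_iff.mp hae
      have hR2path : (S1.append (Walk.cons hadj Walk.nil)).IsPath := by
        refine isPath_append hS1path hcp2 ?_
        intro y hy hy2
        simp only [Walk.support_cons, Walk.support_nil, List.mem_cons,
          List.mem_nil_iff, or_false] at hy2
        rcases hy2 with rfl | rfl
        · rfl
        · exact absurd hy hvS1
      have hR2alt : AltFrom G M 0 (S1.append (Walk.cons hadj Walk.nil)) := by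
        refine hAS1.append (altFrom_single hadj (iff_of_false hunm ?_))
        rw [Nat.zero_add, ← hadef, Nat.odd_iff]; omega
      have hR2len : (S1.append (Walk.cons hadj Walk.nil)).length = a + 1 := by
        rw [Walk.length_append, Walk.length_cons, Walk.length_nil]
      have hOv2 : oddlevel G M v ≤ ((a + 1 : ℕ) : ℕ∞) := by
        have := oddlevel_le_length _ hg hR2path hR2alt.isAlt
          (by rw [hR2len, Nat.odd_iff]; omega)
        rwa [hR2len] at this
      have hma1 : m ≤ a + 1 := by
        have : (m : ℕ∞) ≤ ((a + 1 : ℕ) : ℕ∞) := le_trans (le_of_eq hSlen) hOv2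
        exact_mod_cast this
      have hmin : minlevel G M v = ((a + 1 : ℕ) : ℕ∞) := by
        have hovm : oddlevel G M v = ((a + 1 : ℕ) : ℕ∞) := by
          rw [← hSlen]
          have : a + 1 = m := by
            have hS2pos : 0 < (S.dropUntil u huS).length := by
              rcases Nat.eq_zero_or_pos (S.dropUntil u huS).length with hc | hc
              · exact absurd (Walk.eq_of_length_eq_zero (p := S.dropUntil u huS) hc) huv
              · exact hc
            omega
          exact_mod_cast this.symm
        rw [minlevel, hovm, ← hPlen]
        exact min_eq_right (by exact_mod_cast (by omega : a + 1 ≤ L))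
      refine hpred ⟨g, _, hg, hR2path, hR2alt.isAlt, by rw [hR2len, hmin],
        by rw [hR2len]; omega, ?_⟩
      rw [hR2len, Nat.add_sub_cancel, Walk.getVert_append, ← hadef]
      simp
  · -- u not on S : combine S with the reversed suffix of P
    have hTpath : P2.reverse.IsPath := hP2path.reverse
    have hTlen : P2.reverse.length = P2.length := Walk.length_reverse _
    have hTalt : AltFrom G M 1 P2.reverse := by
      refine hA2.reverse ?_
      omega
    by_cases hhit : ∃ y ∈ S.support, y ∈ {z : V | z ∈ P2.reverse.support ∧ z ≠ v}
    · -- S meets the reversed suffix : split at the first meeting point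
      obtain ⟨x, S1, S2, hxmem, hSeq, hfirst⟩ := exists_first_split _ S hhit
      obtain ⟨hxT, hxv⟩ := hxmem
      set a := S1.length with hadef
      have hsumS : a + S2.length = m := by rw [hmdef, hSeq, Walk.length_append]
      have hSp2 : (S1.append S2).IsPath := by rw [← hSeq]; exact hSpath
      have hS1path : S1.IsPath := hSp2.of_append_left
      have hAS1 : AltFrom G M 0 S1 := by
        have : AltFrom G M 0 (S1.append S2) := by rw [← hSeq]; exact hSalt.altFrom
        exact this.of_append_left
      have hvS1 : v ∉ S1.support := not_end_mem_prefix hSp2 hxv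
      -- split the reversed suffix T at x
      have hspecT := P2.reverse.take_spec hxT
      set T1 := P2.reverse.takeUntil x hxT with hT1def
      set T2 := P2.reverse.dropUntil x hxT with hT2def
      set c := T1.length with hcdef
      have hsumT : c + T2.length = P2.length := by
        rw [← hTlen, ← hspecT, Walk.length_append]
      have hT1path : T1.IsPath := hTpath.takeUntil hxT
      have hT2path : T2.IsPath := hTpath.dropUntil hxT
      have hTp' : (T1.append T2).IsPath := by rw [hspecT]; exact hTpath
      have hATsplit : AltFrom G M 1 (T1.append T2) := by rw [hspecT]; exact hTalt
      have hAT1 : AltFrom G M 1 T1 := hATsplit.of_append_left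
      have hAT2 : AltFrom G M (1 + c) T2 := by
        have := hATsplit.of_append_right
        rwa [← hcdef] at this
      have hvT2 : v ∉ T2.support := not_start_mem_suffix hTp' (Ne.symm hxv)
      rcases Nat.even_or_odd (a + c) with hace | haco
      · -- (a + c) even : gives an even alternating path to v shorter than evenlevel v
        exfalso
        have hace2 : (a + c) % 2 = 0 := Nat.even_iff.mp hace
        have hW'path : (S1.append T1.reverse).IsPath := by
          refine isPath_append hS1path hT1path.reverse ?_
          intro y hy hy2
          rw [Walk.support_reverse, List.mem_reverse] at hy2
          have hyT : y ∈ P2.reverse.support := P2.reverse.support_takeUntil_subset hxT hy2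
          by_cases hyv : y = v
          · exact absurd (hyv ▸ hy) hvS1
          · exact hfirst y hy ⟨hyT, hyv⟩
        have hW'alt : AltFrom G M 0 (S1.append T1.reverse) := by
          refine hAS1.append ?_
          have := hAT1.reverse (r := a) (by omega)
          rwa [Nat.zero_add, ← hadef]
        have hW'len : (S1.append T1.reverse).length = a + c := by
          rw [Walk.length_append, Walk.length_reverse]
        have hlev : evenlevel G M v ≤ ((a + c : ℕ) : ℕ∞) := by
          have := evenlevel_le_length _ hg hW'path hW'alt.isAlt
            (by rw [hW'len, Nat.even_iff]; omega)
          rwa [hW'len] at this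
        rw [← hPlen] at hlev
        have : L ≤ a + c := by exact_mod_cast hlev
        omega
      · -- (a + c) odd : splice S1 with the tail of the reversed suffix
        have haco2 : (a + c) % 2 = 1 := Nat.odd_iff.mp haco
        have hWpath : (S1.append T2).IsPath := by
          refine isPath_append hS1path hT2path ?_
          intro y hy hy2
          have hyT : y ∈ P2.reverse.support := P2.reverse.support_dropUntil_subset hxT hy2
          by_cases hyv : y = v
          · exact absurd (hyv ▸ hy2) hvT2
          · exact hfirst y hy ⟨hyT, hyv⟩
        have hWalt : AltFrom G M 0 (S1.append T2) := by
          refine hAS1.append (hAT2.congr ?_)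
          omega
        refine conclude (S1.append T2) hg hWpath hWalt ?_ ?_
        · rw [Walk.length_append]
          omega
        · rw [Walk.length_append]
          omega
    · -- S is disjoint from the reversed suffix away from v
      push_neg at hhit
      have hWpath : (S.append P2.reverse).IsPath := by
        refine isPath_append hSpath hTpath ?_
        intro y hy hy2
        by_contra hyv
        exact (hhit y hy ⟨hy2, hyv⟩)
      have hWalt : AltFrom G M 0 (S.append P2.reverse) := by
        refine hSalt.altFrom.append (hTalt.congr ?_)
        omega
      refine conclude (S.append P2.reverse) hg hWpath hWalt ?_ ?_
      · rw [Walk.length_append, hTlen, Nat.add_mod]; omega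
      · rw [Walk.length_append, hTlen]; omega

end Main

/-- For an unmatched edge `(u,v)` that is a bridge with `tenacity(u,v) ≤ l_m`, we have
`tenacity(u) ≤ tenacity(u,v)`. -/
theorem stmt16 (G : SimpleGraph V) (M : G.Subgraph) (hM : M.IsMatching)
    (u v : V) (hadj : G.Adj u v) (hunm : s(u, v) ∉ M.edgeSet)
    (hbr : IsBridge G M u v)
    (hlm : evenlevel G M u + evenlevel G M v + 1 ≤ lm G M) :
    tenacity G M u ≤ evenlevel G M u + evenlevel G M v + 1 := by
  have key : oddlevel G M u ≤ evenlevel G M v + 1 :=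
    oddlevel_le_of_unmatched_nonprop hadj hunm hbr.2.1
  calc tenacity G M u = evenlevel G M u + oddlevel G M u := rfl
    _ ≤ evenlevel G M u + (evenlevel G M v + 1) := add_le_add_right key _
    _ = evenlevel G M u + evenlevel G M v + 1 := (add_assoc _ _ _).symm

end MV
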